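/- Let ě ≤ ê and b̌ ≤ b̂ be real numbers. Then the function h : ℝ → ℝ defined by h(p) = max((ě − p)², (ê − p)²) − m(p), where m(p) = (b̌ − p)² if p < b̌, m(p) = (b̂ − p)² if b̂ < p, and m(p) = 0 if b̌ ≤ p ≤ b̂, is convex on ℝ. -/
import Mathlib

/-- Max of two affine functions is convex. -/
lemma maxAff_convex (a1 b1 a2 b2 : ℝ) :
    ConvexOn ℝ Set.univ (fun p : ℝ => max (a1 - b1 * p) (a2 - b2 * p)) := by
  refine ⟨convex_univ, ?_⟩
  intro x _ y _ s t hs ht hst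
  simp only [smul_eq_mul]
  apply max_le
  · have h1 : a1 - b1 * x ≤ max (a1 - b1 * x) (a2 - b2 * x) := le_max_left _ _
    have h2 : a1 - b1 * y ≤ max (a1 - b1 * y) (a2 - b2 * y) := le_max_left _ _
    have e : a1 - b1 * (s * x + t * y) = s * (a1 - b1 * x) + t * (a1 - b1 * y) := by
      linear_combination (-a1) * hst
    have h1' := mul_le_mul_of_nonneg_left h1 hs
    have h2' := mul_le_mul_of_nonneg_left h2 ht
    linarith
  · have h1 : a2 - b2 * x ≤ max (a1 - b1 * x) (a2 - b2 * x) := le_max_right _ _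
    have h2 : a2 - b2 * y ≤ max (a1 - b1 * y) (a2 - b2 * y) := le_max_right _ _
    have e : a2 - b2 * (s * x + t * y) = s * (a2 - b2 * x) + t * (a2 - b2 * y) := by
      linear_combination (-a2) * hst
    have h1' := mul_le_mul_of_nonneg_left h1 hs
    have h2' := mul_le_mul_of_nonneg_left h2 ht
    linarith

/-- `p^2` minus squared distance to the interval `[bl, bh]` is convex. -/
lemma g_convex (bl bh : ℝ) (hB : bl ≤ bh) :
    ConvexOn ℝ Set.univ (fun p : ℝ =>
      p ^ 2 - (if p < bl then (bl - p) ^ 2 else if bh < p then (bh - p) ^ 2 else 0)) := by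
  have key : ∀ q w : ℝ, bl ≤ q → q ≤ bh →
      2 * q * w - q ^ 2 ≤
        w ^ 2 - (if w < bl then (bl - w) ^ 2 else if bh < w then (bh - w) ^ 2 else 0) := by
    intro q w hq1 hq2
    split_ifs with h1 h2
    · nlinarith [mul_nonneg (sub_nonneg.2 hq1) (by linarith : (0:ℝ) ≤ bl - w),
        sq_nonneg (q - bl)]
    · nlinarith [mul_nonneg (sub_nonneg.2 hq2) (by linarith : (0:ℝ) ≤ w - bh),
        sq_nonneg (q - bh)]
    · nlinarith [sq_nonneg (w - q)]
  refine ⟨convex_univ, ?_⟩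
  intro x _ y _ s t hs ht hst
  simp only [smul_eq_mul]
  set z := s * x + t * y with hz
  by_cases h1 : z < bl
  · have hx := key bl x le_rfl hB
    have hy := key bl y le_rfl hB
    simp only [if_pos h1]
    have hx' := mul_le_mul_of_nonneg_left hx hs
    have hy' := mul_le_mul_of_nonneg_left hy ht
    have e : z ^ 2 - (bl - z) ^ 2
        = s * (2 * bl * x - bl ^ 2) + t * (2 * bl * y - bl ^ 2) := by
      linear_combination 2 * bl * hz + bl ^ 2 * hst
    linarith
  · by_cases h2 : bh < z
    · have hx := key bh x hB le_rfl
      have hy := key bh y hB le_rfl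
      simp only [if_neg h1, if_pos h2]
      have hx' := mul_le_mul_of_nonneg_left hx hs
      have hy' := mul_le_mul_of_nonneg_left hy ht
      have e : z ^ 2 - (bh - z) ^ 2
          = s * (2 * bh * x - bh ^ 2) + t * (2 * bh * y - bh ^ 2) := by
        linear_combination 2 * bh * hz + bh ^ 2 * hst
      linarith
    · have hx := key z x (not_lt.1 h1) (not_lt.1 h2)
      have hy := key z y (not_lt.1 h1) (not_lt.1 h2)
      simp only [if_neg h1, if_neg h2]
      have hx' := mul_le_mul_of_nonneg_left hx hs
      have hy' := mul_le_mul_of_nonneg_left hy ht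
      have e : z ^ 2 - 0
          = s * (2 * z * x - z ^ 2) + t * (2 * z * y - z ^ 2) := by
        linear_combination 2 * z * hz + z ^ 2 * hst
      linarith

/-- The one-dimensional contribution `h` to the difference of squared max- and
min-distances to two intervals `[ě, ê]` and `[b̌, b̂]` is convex. -/
theorem h_convex (el eh bl bh : ℝ) (hE : el ≤ eh) (hB : bl ≤ bh) :
    ConvexOn ℝ Set.univ
      (fun p : ℝ =>
        max ((el - p) ^ 2) ((eh - p) ^ 2) -
          (if p < bl then (bl - p) ^ 2 else if bh < p then (bh - p) ^ 2 else 0)) := by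
  have heq : (fun p : ℝ =>
        max ((el - p) ^ 2) ((eh - p) ^ 2) -
          (if p < bl then (bl - p) ^ 2 else if bh < p then (bh - p) ^ 2 else 0)) =
      (fun p : ℝ => max (el ^ 2 - 2 * el * p) (eh ^ 2 - 2 * eh * p)) +
      (fun p : ℝ =>
        p ^ 2 - (if p < bl then (bl - p) ^ 2 else if bh < p then (bh - p) ^ 2 else 0)) := by
    funext p
    have : max ((el - p) ^ 2) ((eh - p) ^ 2)
        = max (el ^ 2 - 2 * el * p) (eh ^ 2 - 2 * eh * p) + p ^ 2 := by
      rw [show (el - p) ^ 2 = (el ^ 2 - 2 * el * p) + p ^ 2 by ring,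
        show (eh - p) ^ 2 = (eh ^ 2 - 2 * eh * p) + p ^ 2 by ring,
        max_add_add_right]
    simp only [Pi.add_apply]
    rw [this]; ring
  rw [heq]
  exact (maxAff_convex _ _ _ _).add (g_convex bl bh hB)
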